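/- Let K be a commutative ring and (𝔖^•, ∘_k) a PreLie-system over K. On the direct sum ⊕_n 𝔖^n, define a bilinear bracket by {f,g} := Σ_{k=1}^{n} f ∘_k g for homogeneous f ∈ 𝔖^n and homogeneous g, extended bilinearly. Then {-,-} satisfies the PreLie identity {{f,g},h} − {f,{g,h}} = {{f,h},g} − {f,{h,g}} for all f,g,h ∈ ⊕_n 𝔖^n. -/

import Mathlib

open DirectSum

section Aux

variable {K : Type*} [CommRing K] {S : ℕ → Type*}
    [∀ n, AddCommGroup (S n)] [∀ n, Module K (S n)]

private lemma of_congr' {a b : ℕ} (hab : a = b) {x : S a} {y : S b} (hxy : HEq x y) :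
    DirectSum.of S a x = DirectSum.of S b y := by
  subst hab
  rw [eq_of_heq hxy]

private lemma key_lemma
    (comp : ∀ n m : ℕ, ℕ → S n →ₗ[K] S m →ₗ[K] S (n + m - 1))
    (hax1 : ∀ (n m l u v : ℕ), 1 ≤ u → u ≤ n → 1 ≤ v → v ≤ m →
      ∀ (f : S n) (g : S m) (h : S l),
        HEq (comp n (m + l - 1) u f (comp m l v g h))
            (comp (n + m - 1) l (u + v - 1) (comp n m u f g) h))
    (hax2 : ∀ (n m l u v : ℕ), 1 ≤ u → u < v → v ≤ n →
      ∀ (f : S n) (g : S m) (h : S l),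
        HEq (comp (n + m - 1) l (v + m - 1) (comp n m u f g) h)
            (comp (n + l - 1) m u (comp n l v f h) g))
    (B : (⨁ n, S n) →ₗ[K] (⨁ n, S n) →ₗ[K] (⨁ n, S n))
    (hB : ∀ (n m : ℕ) (f : S n) (g : S m),
      B (DirectSum.of S n f) (DirectSum.of S m g)
        = ∑ k ∈ Finset.Icc 1 n, DirectSum.of S (n + m - 1) (comp n m k f g))
    (n m l : ℕ) (f : S n) (g : S m) (h : S l) :
    B (B (DirectSum.of S n f) (DirectSum.of S m g)) (DirectSum.of S l h)
      = B (DirectSum.of S n f) (B (DirectSum.of S m g) (DirectSum.of S l h))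
        + ∑ v ∈ Finset.Icc 1 n, ∑ u ∈ Finset.Icc 1 n,
            if u < v then
              DirectSum.of S (n + m - 1 + l - 1) (comp (n + m - 1) l u (comp n m v f g) h)
              + DirectSum.of S (n + l - 1 + m - 1) (comp (n + l - 1) m u (comp n l v f h) g)
            else 0 := by
  set T : ℕ → ℕ → ⨁ n, S n := fun k j =>
    DirectSum.of S (n + m - 1 + l - 1) (comp (n + m - 1) l j (comp n m k f g) h) with hT
  set M : ℕ → ℕ → ⨁ n, S n := fun k v =>
    DirectSum.of S (n + (m + l - 1) - 1) (comp n (m + l - 1) k f (comp m l v g h)) with hM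
  set Q : ℕ → ℕ → ⨁ n, S n := fun u v =>
    DirectSum.of S (n + l - 1 + m - 1) (comp (n + l - 1) m u (comp n l v f h) g) with hQ
  have e1 : B (B (DirectSum.of S n f) (DirectSum.of S m g)) (DirectSum.of S l h)
      = ∑ k ∈ Finset.Icc 1 n, ∑ j ∈ Finset.Icc 1 (n + m - 1), T k j := by
    rw [hB, map_sum, LinearMap.sum_apply]
    exact Finset.sum_congr rfl fun k _ => hB _ _ _ _
  have e2 : B (DirectSum.of S n f) (B (DirectSum.of S m g) (DirectSum.of S l h))
      = ∑ k ∈ Finset.Icc 1 n, ∑ v ∈ Finset.Icc 1 m, M k v := by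
    rw [hB, map_sum, Finset.sum_comm]
    exact Finset.sum_congr rfl fun v _ => hB _ _ _ _
  -- decompose the left-hand side into three blocks
  have hA : ∑ k ∈ Finset.Icc 1 n, ∑ j ∈ Finset.Icc 1 (n + m - 1), T k j
      = (∑ k ∈ Finset.Icc 1 n, ∑ u ∈ Finset.Icc 1 n, if u < k then T k u else 0)
        + (∑ k ∈ Finset.Icc 1 n, ∑ v ∈ Finset.Icc 1 m, M k v)
        + (∑ k ∈ Finset.Icc 1 n, ∑ v ∈ Finset.Icc 1 n, if k < v then Q k v else 0) := by
    rw [← Finset.sum_add_distrib, ← Finset.sum_add_distrib]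
    refine Finset.sum_congr rfl fun k hk => ?_
    rw [Finset.mem_Icc] at hk
    obtain ⟨hk1, hkn⟩ := hk
    have hsplit : ∑ j ∈ Finset.Icc 1 (n + m - 1), T k j
        = (∑ j ∈ Finset.Ioc 0 (k - 1), T k j)
          + (∑ j ∈ Finset.Ioc (k - 1) (k + m - 1), T k j)
          + (∑ j ∈ Finset.Ioc (k + m - 1) (n + m - 1), T k j) := by
      rw [Finset.sum_Ioc_consecutive _ (by omega : 0 ≤ k - 1)
          (by omega : k - 1 ≤ k + m - 1),
        Finset.sum_Ioc_consecutive _ (by omega : 0 ≤ k + m - 1)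
          (by omega : k + m - 1 ≤ n + m - 1)]
      refine Finset.sum_congr ?_ fun _ _ => rfl
      ext j
      simp only [Finset.mem_Icc, Finset.mem_Ioc]
      omega
    have hlow : ∑ j ∈ Finset.Ioc 0 (k - 1), T k j
        = ∑ u ∈ Finset.Icc 1 n, if u < k then T k u else 0 := by
      rw [← Finset.sum_filter]
      refine Finset.sum_congr ?_ fun _ _ => rfl
      ext j
      simp only [Finset.mem_Ioc, Finset.mem_filter, Finset.mem_Icc]
      omega
    have hmid : ∑ j ∈ Finset.Ioc (k - 1) (k + m - 1), T k j
        = ∑ v ∈ Finset.Icc 1 m, M k v := by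
      refine Finset.sum_nbij' (fun j => j - k + 1) (fun v => k + v - 1) ?_ ?_ ?_ ?_ ?_
      · intro j hj; simp only [Finset.mem_Ioc] at hj; simp only [Finset.mem_Icc]; omega
      · intro v hv; simp only [Finset.mem_Icc] at hv; simp only [Finset.mem_Ioc]; omega
      · intro j hj; simp only [Finset.mem_Ioc] at hj; omega
      · intro v hv; simp only [Finset.mem_Icc] at hv; omega
      · intro j hj
        simp only [Finset.mem_Ioc] at hj
        have hheq := hax1 n m l k (j - k + 1) hk1 hkn (by omega) (by omega) f g h
        have hidx : n + (m + l - 1) - 1 = n + m - 1 + l - 1 := by omega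
        have hjj : k + (j - k + 1) - 1 = j := by omega
        rw [hjj] at hheq
        exact (of_congr' hidx hheq).symm
    have hhigh : ∑ j ∈ Finset.Ioc (k + m - 1) (n + m - 1), T k j
        = ∑ v ∈ Finset.Icc 1 n, if k < v then Q k v else 0 := by
      rw [← Finset.sum_filter]
      refine Finset.sum_nbij' (fun j => j - m + 1) (fun v => v + m - 1) ?_ ?_ ?_ ?_ ?_
      · intro j hj; simp only [Finset.mem_Ioc] at hj
        simp only [Finset.mem_filter, Finset.mem_Icc]; omega
      · intro v hv; simp only [Finset.mem_filter, Finset.mem_Icc] at hv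
        simp only [Finset.mem_Ioc]; omega
      · intro j hj; simp only [Finset.mem_Ioc] at hj; omega
      · intro v hv; simp only [Finset.mem_filter, Finset.mem_Icc] at hv; omega
      · intro j hj
        simp only [Finset.mem_Ioc] at hj
        have hheq := hax2 n m l k (j - m + 1) hk1 (by omega) (by omega) f g h
        have hidx : n + m - 1 + l - 1 = n + l - 1 + m - 1 := by omega
        have hjj : j - m + 1 + m - 1 = j := by omega
        rw [hjj] at hheq
        exact of_congr' hidx hheq
    rw [hsplit, hlow, hmid, hhigh]
  rw [e1, e2, hA]
  -- swap the order of summation in the Q-block and merge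
  have hC : ∑ k ∈ Finset.Icc 1 n, ∑ v ∈ Finset.Icc 1 n, (if k < v then Q k v else 0)
      = ∑ v ∈ Finset.Icc 1 n, ∑ u ∈ Finset.Icc 1 n, (if u < v then Q u v else 0) :=
    Finset.sum_comm
  rw [hC]
  have hmerge : (∑ k ∈ Finset.Icc 1 n, ∑ u ∈ Finset.Icc 1 n, if u < k then T k u else 0)
      + (∑ v ∈ Finset.Icc 1 n, ∑ u ∈ Finset.Icc 1 n, if u < v then Q u v else 0)
      = ∑ v ∈ Finset.Icc 1 n, ∑ u ∈ Finset.Icc 1 n,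
          if u < v then
            DirectSum.of S (n + m - 1 + l - 1) (comp (n + m - 1) l u (comp n m v f g) h)
            + DirectSum.of S (n + l - 1 + m - 1) (comp (n + l - 1) m u (comp n l v f h) g)
          else 0 := by
    rw [← Finset.sum_add_distrib]
    refine Finset.sum_congr rfl fun v _ => ?_
    rw [← Finset.sum_add_distrib]
    refine Finset.sum_congr rfl fun u _ => ?_
    split_ifs
    · rfl
    · simp
  rw [add_right_comm, hmerge, add_comm]

end Aux

/-- For a PreLie-system `(𝔖^•, ∘_k)` over a commutative ring `K`,
the bracket `{f,g} = Σ_{k=1}^n f ∘_k g` (for homogeneous `f ∈ 𝔖^n`), extended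
bilinearly to the direct sum `⊕_n 𝔖^n`, satisfies the PreLie identity. -/
theorem stmt_5 (K : Type*) [CommRing K] (S : ℕ → Type*)
    [∀ n, AddCommGroup (S n)] [∀ n, Module K (S n)]
    (comp : ∀ n m : ℕ, ℕ → S n →ₗ[K] S m →ₗ[K] S (n + m - 1))
    (hax1 : ∀ (n m l u v : ℕ), 1 ≤ u → u ≤ n → 1 ≤ v → v ≤ m →
      ∀ (f : S n) (g : S m) (h : S l),
        HEq (comp n (m + l - 1) u f (comp m l v g h))
            (comp (n + m - 1) l (u + v - 1) (comp n m u f g) h))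
    (hax2 : ∀ (n m l u v : ℕ), 1 ≤ u → u < v → v ≤ n →
      ∀ (f : S n) (g : S m) (h : S l),
        HEq (comp (n + m - 1) l (v + m - 1) (comp n m u f g) h)
            (comp (n + l - 1) m u (comp n l v f h) g))
    (B : (⨁ n, S n) →ₗ[K] (⨁ n, S n) →ₗ[K] (⨁ n, S n))
    (hB : ∀ (n m : ℕ) (f : S n) (g : S m),
      B (DirectSum.of S n f) (DirectSum.of S m g)
        = ∑ k ∈ Finset.Icc 1 n, DirectSum.of S (n + m - 1) (comp n m k f g)) :
    ∀ f g h : ⨁ n, S n,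
      B (B f g) h - B f (B g h) = B (B f h) g - B f (B h g) := by
  -- the homogeneous case
  have H : ∀ (n m l : ℕ) (a : S n) (b : S m) (c : S l),
      B (B (DirectSum.of S n a) (DirectSum.of S m b)) (DirectSum.of S l c)
        - B (DirectSum.of S n a) (B (DirectSum.of S m b) (DirectSum.of S l c))
      = B (B (DirectSum.of S n a) (DirectSum.of S l c)) (DirectSum.of S m b)
        - B (DirectSum.of S n a) (B (DirectSum.of S l c) (DirectSum.of S m b)) := by
    intro n m l a b c
    rw [key_lemma comp hax1 hax2 B hB n m l a b c,
      key_lemma comp hax1 hax2 B hB n l m a c b]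
    have hsym : ∑ v ∈ Finset.Icc 1 n, ∑ u ∈ Finset.Icc 1 n,
          (if u < v then
            DirectSum.of S (n + m - 1 + l - 1) (comp (n + m - 1) l u (comp n m v a b) c)
            + DirectSum.of S (n + l - 1 + m - 1) (comp (n + l - 1) m u (comp n l v a c) b)
          else 0)
        = ∑ v ∈ Finset.Icc 1 n, ∑ u ∈ Finset.Icc 1 n,
          (if u < v then
            DirectSum.of S (n + l - 1 + m - 1) (comp (n + l - 1) m u (comp n l v a c) b)
            + DirectSum.of S (n + m - 1 + l - 1) (comp (n + m - 1) l u (comp n m v a b) c)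
          else 0) := by
      refine Finset.sum_congr rfl fun v _ => Finset.sum_congr rfl fun u _ => ?_
      split_ifs
      · exact add_comm _ _
      · rfl
    rw [hsym]
    abel
  intro f g h
  induction f using DirectSum.induction_on with
  | zero => simp
  | of n a =>
    induction g using DirectSum.induction_on with
    | zero => simp
    | of m b =>
      induction h using DirectSum.induction_on with
      | zero => simp
      | of l c => exact H n m l a b c
      | add h1 h2 ih1 ih2 =>
        simp only [map_add, LinearMap.add_apply] at ih1 ih2 ⊢
        rw [← sub_add_sub_comm, ih1, ih2, sub_add_sub_comm]
    | add g1 g2 ih1 ih2 =>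
      simp only [map_add, LinearMap.add_apply] at ih1 ih2 ⊢
      rw [← sub_add_sub_comm, ih1, ih2, sub_add_sub_comm]
  | add f1 f2 ih1 ih2 =>
    simp only [map_add, LinearMap.add_apply] at ih1 ih2 ⊢
    linear_combination (norm := abel) ih1 + ih2
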